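/- arXiv:1104.1303 — 3 statements merged into one kernel-verified Lean document; each statement's English description precedes it below -/
import Mathlib

section
/- If α: ℝ → ℝ≥0 is a convex, even (symmetric) C¹ function with α(0)=α'(0)=0 whose derivative α' is concave on [0,∞), then for all u,v ∈ ℝ: α(u+v) ≤ α(u) + v·α'(u) + 4·α(v/2). -/
open Real Set

/-- Lemma 5.2: for `α` convex, even, `C¹`, with `α(0)=α'(0)=0` and `α'` concave on
`[0,∞)`, one has `α(u+v) ≤ α(u) + v α'(u) + 4 α(v/2)` for all reals `u, v`. -/
theorem alpha_ineq (α : ℝ → ℝ) (hnn : ∀ t, 0 ≤ α t)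
    (hconv : ConvexOn ℝ Set.univ α) (heven : ∀ t, α (-t) = α t)
    (hC1 : ContDiff ℝ 1 α) (h0 : α 0 = 0) (h0' : deriv α 0 = 0)
    (hconc : ConcaveOn ℝ (Set.Ici 0) (deriv α)) :
    ∀ u v : ℝ, α (u + v) ≤ α u + v * deriv α u + 4 * α (v / 2) := by
  set g := deriv α with hg
  have hdiff : Differentiable ℝ α := hC1.differentiable one_ne_zero
  have hα : ∀ x, HasDerivAt α (g x) x := fun x => (hdiff x).hasDerivAt
  -- g is odd
  have godd : ∀ t, g (-t) = - g t := by
    intro t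
    have hfun : (fun x => α (-x)) = α := funext heven
    have h1 : deriv (fun x => α (-x)) t = g (-t) * (-1) :=
      ((hα (-t)).comp t (hasDerivAt_neg t)).deriv
    rw [hfun] at h1
    have : g t = -g (-t) := by linarith [h1]
    linarith [this]
  -- scaling inequality from concavity through 0
  have key2 : ∀ x t : ℝ, 0 ≤ x → 0 ≤ t → t ≤ 1 → t * g x ≤ g (t * x) := by
    intro x t hx ht ht1
    have h := hconc.2 (mem_Ici.2 hx) (mem_Ici.2 (le_refl (0:ℝ))) ht
      (by linarith : (0:ℝ) ≤ 1 - t) (by ring)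
    simpa [smul_eq_mul, h0'] using h
  -- subadditivity of g on [0,∞)
  have subadd : ∀ a b : ℝ, 0 ≤ a → 0 ≤ b → g (a + b) ≤ g a + g b := by
    intro a b ha hb
    rcases eq_or_lt_of_le (add_nonneg ha hb) with h | h
    · have ha0 : a = 0 := by linarith
      have hb0 : b = 0 := by linarith
      simp [ha0, hb0, h0']
    · have h1 := key2 (a+b) (a/(a+b)) (le_of_lt h) (div_nonneg ha (le_of_lt h))
        (by rw [div_le_one h]; linarith)
      have h2 := key2 (a+b) (b/(a+b)) (le_of_lt h) (div_nonneg hb (le_of_lt h))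
        (by rw [div_le_one h]; linarith)
      rw [div_mul_cancel₀ a (ne_of_gt h)] at h1
      rw [div_mul_cancel₀ b (ne_of_gt h)] at h2
      have hsum : a/(a+b) * g (a+b) + b/(a+b) * g (a+b) = g (a+b) := by
        field_simp
      linarith
  -- Jensen
  have jensen : ∀ a b : ℝ, 0 ≤ a → 0 ≤ b → g a + g b ≤ 2 * g ((a+b)/2) := by
    intro a b ha hb
    have h := hconc.2 (mem_Ici.2 ha) (mem_Ici.2 hb)
      (by norm_num : (0:ℝ) ≤ 1/2) (by norm_num : (0:ℝ) ≤ 1/2) (by norm_num)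
    simp only [smul_eq_mul] at h
    have he : (1/2 : ℝ) * a + (1/2 : ℝ) * b = (a+b)/2 := by ring
    rw [he] at h
    linarith
  -- pointwise derivative bound
  have ptw : ∀ u s : ℝ, 0 ≤ s → g (u + s) ≤ 2 * g (s/2) + g u := by
    intro u s hs
    have hgs : g s ≤ 2 * g (s/2) := by
      have h := jensen s 0 hs (le_refl 0)
      rw [h0'] at h
      have he : (s + 0)/2 = s/2 := by ring
      rw [he] at h
      linarith
    rcases le_or_gt 0 u with hu | hu
    · have := subadd u s hu hs
      linarith
    · rcases le_or_gt 0 (u+s) with hus | hus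
      · have h := jensen (u+s) (-u) hus (by linarith)
        rw [godd] at h
        have he : (u + s + -u)/2 = s/2 := by ring
        rw [he] at h
        linarith
      · have h1 := subadd s (-(u+s)) hs (by linarith)
        have he : s + -(u+s) = -u := by ring
        rw [he, godd, godd] at h1
        linarith
  -- main inequality for v ≥ 0
  have main : ∀ u v : ℝ, 0 ≤ v → α (u + v) ≤ α u + v * g u + 4 * α (v/2) := by
    intro u v hv
    set φ : ℝ → ℝ := fun s => α u + s * g u + 4 * α (s/2) - α (u + s) with hφ
    have hφd : ∀ s, HasDerivAt φ (g u + 4 * (g (s/2) * (1/2)) - g (u+s)) s := by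
      intro s
      have h1 : HasDerivAt (fun s:ℝ => s * g u) (g u) s := by
        simpa using (hasDerivAt_id s).mul_const (g u)
      have h2 : HasDerivAt (fun s:ℝ => α (s/2)) (g (s/2) * (1/2)) s := by
        have hd : HasDerivAt (fun s:ℝ => s/2) (1/2) s := by
          simpa using (hasDerivAt_id s).div_const 2
        exact (hα (s/2)).comp s hd
      have h3 : HasDerivAt (fun s:ℝ => α (u+s)) (g (u+s)) s := by
        have hd : HasDerivAt (fun s:ℝ => u+s) 1 s := by
          simpa using (hasDerivAt_id s).const_add u
        exact ((hα (u+s)).comp s hd).congr_deriv (mul_one _)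
      have := (((hasDerivAt_const s (α u)).add h1).add (h2.const_mul 4)).sub h3
      exact this.congr_deriv (by ring)
    have hφdiff : Differentiable ℝ φ := fun s => (hφd s).differentiableAt
    have hmono : MonotoneOn φ (Ici 0) := by
      apply monotoneOn_of_deriv_nonneg (convex_Ici 0) hφdiff.continuous.continuousOn
        (hφdiff.differentiableOn)
      intro s hs
      rw [interior_Ici] at hs
      rw [(hφd s).deriv]
      have := ptw u s (le_of_lt hs)
      linarith
    have hle : φ 0 ≤ φ v := hmono (self_mem_Ici) (mem_Ici.2 hv) hv
    have h0φ : φ 0 = 0 := by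
      simp [hφ, h0]
    have hvφ : φ v = α u + v * g u + 4 * α (v/2) - α (u + v) := rfl
    rw [h0φ, hvφ] at hle
    linarith
  intro u v
  rcases le_or_gt 0 v with hv | hv
  · exact main u v hv
  · have h := main (-u) (-v) (by linarith)
    rw [show -u + -v = -(u+v) by ring, heven, heven, godd] at h
    have he2 : α (-v/2) = α (v/2) := by
      rw [show (-v)/2 = -(v/2) by ring, heven]
    rw [he2] at h
    have heq : (-v) * (-(g u)) = v * g u := by ring
    rw [heq] at h
    exact h
end

section
/- Let α: ℝ → ℝ≥0 be a convex, even C¹ function with α(0)=α'(0)=0 and α' concave on [0,∞). Then for any u ∈ (0,1) and any x ∈ ℝ, one has α(x/u) ≤ α(x)/u². -/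
open Real Set

private lemma alpha_key (α : ℝ → ℝ)
    (hC1 : ContDiff ℝ 1 α) (h0 : α 0 = 0) (h0' : deriv α 0 = 0)
    (hconc : ConcaveOn ℝ (Set.Ici 0) (deriv α)) :
    ∀ x : ℝ, 0 ≤ x → ∀ c : ℝ, 1 ≤ c → α (c * x) ≤ c ^ 2 * α x := by
  intro x hx c hc
  have hc0 : 0 < c := lt_of_lt_of_le one_pos hc
  have hdiff : Differentiable ℝ α := hC1.differentiable one_ne_zero
  have hcont : Continuous (deriv α) := hC1.continuous_deriv le_rfl
  -- pointwise inequality deriv α (c*t) ≤ c * deriv α t for t ≥ 0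
  have hpt : ∀ t : ℝ, 0 ≤ t → deriv α (c * t) ≤ c * deriv α t := by
    intro t ht
    have h1 : (c * t : ℝ) ∈ Set.Ici (0:ℝ) := mul_nonneg hc0.le ht
    have h2 : (0:ℝ) ∈ Set.Ici (0:ℝ) := Set.self_mem_Ici
    have ha : (0:ℝ) ≤ 1/c := by positivity
    have hb : (0:ℝ) ≤ 1 - 1/c := by
      have : 1/c ≤ 1 := by
        rw [div_le_one hc0]; exact hc
      linarith
    have hab : 1/c + (1 - 1/c) = 1 := by ring
    have := hconc.2 h1 h2 ha hb hab
    simp only [smul_eq_mul, mul_zero, add_zero, h0'] at this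
    have heq : (1/c) * (c * t) = t := by field_simp
    rw [heq] at this
    -- this : (1/c) * deriv α (c*t) + (1-1/c)*0 ≤ deriv α t
    have h3 : (1/c) * deriv α (c * t) ≤ deriv α t := by linarith
    calc deriv α (c * t) = c * ((1/c) * deriv α (c * t)) := by field_simp
      _ ≤ c * deriv α t := by
          exact mul_le_mul_of_nonneg_left h3 hc0.le
  -- FTC representation
  have ftc : ∀ b : ℝ, α b = ∫ t in (0:ℝ)..b, deriv α t := by
    intro b
    have := intervalIntegral.integral_deriv_eq_sub
      (f := α) (a := 0) (b := b)
      (fun t _ => hdiff.differentiableAt) (hcont.intervalIntegrable 0 b)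
    rw [this, h0, sub_zero]
  have hsub : (∫ t in (0:ℝ)..(c*x), deriv α t)
      = c * ∫ t in (0:ℝ)..x, deriv α (c * t) := by
    have := intervalIntegral.smul_integral_comp_mul_left
      (a := (0:ℝ)) (b := x) (f := deriv α) c
    rw [mul_zero] at this
    rw [← this]; simp [smul_eq_mul]
  have hmono : (∫ t in (0:ℝ)..x, deriv α (c * t))
      ≤ ∫ t in (0:ℝ)..x, c * deriv α t := by
    apply intervalIntegral.integral_mono_on hx
    · exact (hcont.comp (continuous_const.mul continuous_id)).intervalIntegrable 0 x
    · exact (continuous_const.mul hcont).intervalIntegrable 0 x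
    · intro t ht; exact hpt t ht.1
  have hcmul : (∫ t in (0:ℝ)..x, c * deriv α t) = c * α x := by
    rw [intervalIntegral.integral_const_mul, ← ftc]
  calc α (c * x) = ∫ t in (0:ℝ)..(c*x), deriv α t := ftc _
    _ = c * ∫ t in (0:ℝ)..x, deriv α (c * t) := hsub
    _ ≤ c * (c * α x) := by
        rw [← hcmul]; exact mul_le_mul_of_nonneg_left hmono hc0.le
    _ = c ^ 2 * α x := by ring

/-- Lemma 5.4 (i): for `α` convex, even, `C¹`, with `α(0)=α'(0)=0` and `α'`
concave on `[0,∞)`, for any `u ∈ (0,1)` and any real `x`, `α(x/u) ≤ α(x)/u²`. -/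
theorem alpha_scaling (α : ℝ → ℝ) (hnn : ∀ t, 0 ≤ α t)
    (hconv : ConvexOn ℝ Set.univ α) (heven : ∀ t, α (-t) = α t)
    (hC1 : ContDiff ℝ 1 α) (h0 : α 0 = 0) (h0' : deriv α 0 = 0)
    (hconc : ConcaveOn ℝ (Set.Ici 0) (deriv α)) :
    ∀ u ∈ Set.Ioo (0 : ℝ) 1, ∀ x : ℝ, α (x / u) ≤ α x / u ^ 2 := by
  intro u hu x
  obtain ⟨hu0, hu1⟩ := hu
  have hc : (1:ℝ) ≤ 1/u := by
    rw [le_div_iff₀ hu0]; linarith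
  have key : ∀ y : ℝ, 0 ≤ y → α (y / u) ≤ α y / u ^ 2 := by
    intro y hy
    have := alpha_key α hC1 h0 h0' hconc y hy (1/u) hc
    have e1 : (1/u) * y = y / u := by ring
    have e2 : (1/u)^2 * α y = α y / u^2 := by
      field_simp
    rw [e1, e2] at this
    exact this
  rcases le_or_gt 0 x with hx | hx
  · exact key x hx
  · have := key (-x) (by linarith)
    rw [heven] at this
    have e : (-x) / u = -(x/u) := by ring
    rw [e, heven] at this
    exact this
end

section
/- Let α: ℝ → ℝ≥0 be a convex, even C¹ function with α(0)=α'(0)=0, α' concave on [0,∞), and α(t) ≠ 0 for t ≠ 0. Define ω_α(x) = sup_{u>0} α(ux)/α(u). Then for any u ∈ (0,1), ω_α(1/u) ≤ 1/u². -/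
open Real Set

/-- Lemma 5.4 (ii): with `ω_α(x) = sup_{v>0} α(vx)/α(v)`, for any `u ∈ (0,1)`
one has `ω_α(1/u) ≤ 1/u²`. -/
theorem omega_alpha_bound (α : ℝ → ℝ) (hnn : ∀ t, 0 ≤ α t)
    (hconv : ConvexOn ℝ Set.univ α) (heven : ∀ t, α (-t) = α t)
    (hC1 : ContDiff ℝ 1 α) (h0 : α 0 = 0) (h0' : deriv α 0 = 0)
    (hconc : ConcaveOn ℝ (Set.Ici 0) (deriv α))
    (hpos : ∀ t : ℝ, t ≠ 0 → α t ≠ 0) :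
    ∀ u ∈ Set.Ioo (0 : ℝ) 1,
      (⨆ v : {v : ℝ // 0 < v}, α ((v : ℝ) * (1 / u)) / α (v : ℝ)) ≤ 1 / u ^ 2 := by
  intro u hu
  have hd : Differentiable ℝ α := hC1.differentiable one_ne_zero
  have hcd : Continuous (deriv α) := hC1.continuous_deriv le_rfl
  -- FTC representation
  have hftc : ∀ x : ℝ, α x = ∫ t in (0:ℝ)..x, deriv α t := by
    intro x
    rw [intervalIntegral.integral_deriv_eq_sub (fun y _ => hd y)
      (hcd.intervalIntegrable _ _), h0, sub_zero]
  -- key pointwise derivative bound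
  have hderiv : ∀ c : ℝ, 1 ≤ c → ∀ t : ℝ, 0 ≤ t → deriv α (c * t) ≤ c * deriv α t := by
    intro c hc t ht
    have hc0 : 0 < c := lt_of_lt_of_le one_pos hc
    have hmem1 : (c * t) ∈ Set.Ici (0:ℝ) := mul_nonneg hc0.le ht
    have hmem2 : (0:ℝ) ∈ Set.Ici (0:ℝ) := Set.mem_Ici.mpr le_rfl
    have ha : (0:ℝ) ≤ 1/c := by positivity
    have hb : (0:ℝ) ≤ 1 - 1/c := by
      have : 1/c ≤ 1 := by
        rw [div_le_one hc0]; exact hc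
      linarith
    have hab : (1/c) + (1 - 1/c) = 1 := by ring
    have := hconc.2 hmem1 hmem2 ha hb hab
    simp only [smul_eq_mul, mul_zero, add_zero, h0'] at this
    have h1 : (1/c) * deriv α (c * t) ≤ deriv α t := by
      calc (1/c) * deriv α (c * t) ≤ deriv α ((1/c) * (c * t)) := by simpa using this
        _ = deriv α t := by rw [one_div, inv_mul_cancel_left₀ hc0.ne']
    calc deriv α (c * t) = c * ((1/c) * deriv α (c * t)) := by
          field_simp
      _ ≤ c * deriv α t := by nlinarith
  -- key growth bound
  have key : ∀ c : ℝ, 1 ≤ c → ∀ v : ℝ, 0 ≤ v → α (c * v) ≤ c ^ 2 * α v := by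
    intro c hc v hv
    have hc0 : 0 < c := lt_of_lt_of_le one_pos hc
    have hsub : (∫ t in (0:ℝ)..v, deriv α (c * t)) = c⁻¹ * ∫ t in (0:ℝ)..(c*v), deriv α t := by
      have := intervalIntegral.integral_comp_mul_left (a := (0:ℝ)) (b := v) (deriv α) hc0.ne'
      simpa [mul_zero] using this
    have hmono : (∫ t in (0:ℝ)..v, deriv α (c * t)) ≤ ∫ t in (0:ℝ)..v, c * deriv α t := by
      apply intervalIntegral.integral_mono_on hv
      · exact ((hcd.comp (continuous_const.mul continuous_id)).intervalIntegrable _ _)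
      · exact ((continuous_const.mul hcd).intervalIntegrable _ _)
      · intro t ht
        exact hderiv c hc t ht.1
    have h2 : c⁻¹ * α (c * v) ≤ c * α v := by
      rw [hftc (c*v), hftc v]
      calc c⁻¹ * ∫ t in (0:ℝ)..(c*v), deriv α t = ∫ t in (0:ℝ)..v, deriv α (c * t) :=
            hsub.symm
        _ ≤ ∫ t in (0:ℝ)..v, c * deriv α t := hmono
        _ = c * ∫ t in (0:ℝ)..v, deriv α t := by
            rw [intervalIntegral.integral_const_mul]
    calc α (c * v) = c * (c⁻¹ * α (c * v)) := by field_simp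
      _ ≤ c * (c * α v) := by nlinarith
      _ = c ^ 2 * α v := by ring
  obtain ⟨hu0, hu1⟩ := hu
  have hc : (1:ℝ) ≤ 1/u := by
    rw [le_div_iff₀ hu0]; linarith
  apply ciSup_le
  rintro ⟨v, hv⟩
  have hαv : 0 < α v := lt_of_le_of_ne (hnn v) (Ne.symm (hpos v hv.ne'))
  rw [div_le_iff₀ hαv]
  have := key (1/u) hc v hv.le
  calc α (v * (1/u)) = α ((1/u) * v) := by rw [mul_comm]
    _ ≤ (1/u)^2 * α v := this
    _ = 1/u^2 * α v := by rw [div_pow, one_pow]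
end
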